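/- For every j₁, j₂ ∈ {0,1,2,3} and every α ∈ R there exist ℓ ∈ ℕ, digits c_0, …, c_{ℓ−1} ∈ D̃(j₁,j₂) with at least one of c_i, c_{i+1} equal to 0 for every i with 0 ≤ i ≤ ℓ−2, and an element β ∈ R with Q(β) ≤ 20, such that α = Σ_{i=0}^{ℓ−1} c_i·τ^i + τ^ℓ·β in R. -/

import Mathlib

open Polynomial Complex

noncomputable def P (μ : ℤ) : ℤ[X] := X ^ 4 - C μ * X ^ 3 - C (2 * μ) * X + 4

noncomputable abbrev Rg (μ : ℤ) := AdjoinRoot (P μ)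

noncomputable def tau (μ : ℤ) : Rg μ := AdjoinRoot.root (P μ)

noncomputable def Dtil (μ : ℤ) (j₁ j₂ : ℕ) : Set (Rg μ) :=
  {0, 1, -1, 2, -2, 1 + tau μ, 1 - tau μ, -1 + tau μ, -1 - tau μ,
   (-1 : Rg μ) ^ (j₁ / 2) * (2 + tau μ), (-1 : Rg μ) ^ j₁ * (2 - tau μ),
   1 + 2 * (μ : Rg μ) * (-1 : Rg μ) ^ (j₂ / 2) * tau μ,
   -1 + 2 * (μ : Rg μ) * (-1 : Rg μ) ^ j₂ * tau μ}

noncomputable def mkelt (μ a b c d : ℤ) : Rg μ :=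
  (a : Rg μ) + (b : Rg μ) * tau μ + (c : Rg μ) * tau μ ^ 2 + (d : Rg μ) * tau μ ^ 3

lemma monicP (μ : ℤ) : (P μ).Monic := by
  unfold P; monicity!

lemma natDegreeP (μ : ℤ) : (P μ).natDegree = 4 := by
  unfold P; compute_degree!

lemma htau4 (μ : ℤ) :
    tau μ ^ 4 = (μ : Rg μ) * tau μ ^ 3 + (2 * μ : ℤ) * tau μ - 4 := by
  have h : AdjoinRoot.mk (P μ) (X ^ 4 - C μ * X ^ 3 - C (2 * μ) * X + 4) = 0 :=
    AdjoinRoot.mk_self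
  simp only [map_add, map_sub, map_mul, map_pow, AdjoinRoot.mk_X, map_ofNat,
    AdjoinRoot.mk_C, eq_intCast, map_intCast] at h
  rw [show AdjoinRoot.root (P μ) = tau μ from rfl] at h
  push_cast
  linear_combination h

lemma rep (μ : ℤ) (α : Rg μ) : ∃ a b c d : ℤ, α = mkelt μ a b c d := by
  induction α using AdjoinRoot.induction_on with
  | ih g =>
    have hmod := Polynomial.modByMonic_add_div g (P μ)
    set r := g %ₘ P μ with hr
    have hdeg : r.natDegree < 4 := by
      rw [← natDegreeP μ]
      exact Polynomial.natDegree_modByMonic_lt g (monicP μ) (by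
        intro h
        have := natDegreeP μ
        rw [h] at this
        simp at this)
    refine ⟨r.coeff 0, r.coeff 1, r.coeff 2, r.coeff 3, ?_⟩
    have h1 : AdjoinRoot.mk (P μ) g = AdjoinRoot.mk (P μ) r := by
      rw [← hmod]
      simp [map_add, map_mul, AdjoinRoot.mk_self]
    conv_lhs => rw [h1, r.as_sum_range' 4 hdeg]
    simp only [map_sum]
    rw [Finset.sum_range_succ, Finset.sum_range_succ, Finset.sum_range_succ,
      Finset.sum_range_succ, Finset.sum_range_zero]
    simp only [← Polynomial.C_mul_X_pow_eq_monomial, map_mul, map_pow, AdjoinRoot.mk_X,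
      AdjoinRoot.mk_C, eq_intCast, map_intCast]
    unfold mkelt tau
    push_cast
    ring


noncomputable def sq17 : ℝ := Real.sqrt 17
noncomputable def rr (μ : ℤ) : ℝ := (-(μ : ℝ) + sq17) / 2
noncomputable def tt (μ : ℤ) : ℝ := (-(μ : ℝ) - sq17) / 2
noncomputable def sr (μ : ℤ) : ℝ := Real.sqrt (8 - rr μ ^ 2)
noncomputable def st (μ : ℤ) : ℝ := Real.sqrt (8 - tt μ ^ 2)
noncomputable def z1 (μ : ℤ) : ℂ := (-(rr μ : ℂ) + (sr μ : ℂ) * I) / 2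
noncomputable def z2 (μ : ℤ) : ℂ := (-(rr μ : ℂ) - (sr μ : ℂ) * I) / 2
noncomputable def z3 (μ : ℤ) : ℂ := (-(tt μ : ℂ) + (st μ : ℂ) * I) / 2
noncomputable def z4 (μ : ℤ) : ℂ := (-(tt μ : ℂ) - (st μ : ℂ) * I) / 2

lemma hsq17 : sq17 ^ 2 = 17 := Real.sq_sqrt (by norm_num)
lemma hsq17nn : 0 ≤ sq17 := Real.sqrt_nonneg _
lemma hsq17le : sq17 ≤ 5 := by nlinarith [hsq17, hsq17nn]
lemma hsq17ge : 4 ≤ sq17 := by nlinarith [hsq17, hsq17nn]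

lemma hrr8 (μ : ℤ) (hμ : μ = 1 ∨ μ = -1) : rr μ ^ 2 ≤ 7 := by
  rcases hμ with h | h <;> subst h <;> unfold rr <;>
    push_cast <;> nlinarith [hsq17, hsq17nn, hsq17le]

lemma htt8 (μ : ℤ) (hμ : μ = 1 ∨ μ = -1) : tt μ ^ 2 ≤ 7 := by
  rcases hμ with h | h <;> subst h <;> unfold tt <;>
    push_cast <;> nlinarith [hsq17, hsq17nn, hsq17le]

lemma hsr (μ : ℤ) (hμ : μ = 1 ∨ μ = -1) : sr μ ^ 2 = 8 - rr μ ^ 2 :=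
  Real.sq_sqrt (by nlinarith [hrr8 μ hμ])

lemma hst (μ : ℤ) (hμ : μ = 1 ∨ μ = -1) : st μ ^ 2 = 8 - tt μ ^ 2 :=
  Real.sq_sqrt (by nlinarith [htt8 μ hμ])

lemma hz12sum (μ : ℤ) : z1 μ + z2 μ = -(rr μ : ℂ) := by unfold z1 z2; ring
lemma hz34sum (μ : ℤ) : z3 μ + z4 μ = -(tt μ : ℂ) := by unfold z3 z4; ring

lemma hz12prod (μ : ℤ) (hμ : μ = 1 ∨ μ = -1) : z1 μ * z2 μ = 2 := by
  unfold z1 z2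
  have h := hsr μ hμ
  have : ((sr μ : ℂ)) ^ 2 = 8 - (rr μ : ℂ) ^ 2 := by
    rw [← Complex.ofReal_pow, h]; push_cast; ring
  linear_combination (1/4 : ℂ) * this + (-(sr μ:ℂ)^2/4) * Complex.I_sq
lemma hz34prod (μ : ℤ) (hμ : μ = 1 ∨ μ = -1) : z3 μ * z4 μ = 2 := by
  unfold z3 z4
  have h := hst μ hμ
  have : ((st μ : ℂ)) ^ 2 = 8 - (tt μ : ℂ) ^ 2 := by
    rw [← Complex.ofReal_pow, h]; push_cast; ring
  linear_combination (1/4 : ℂ) * this + (-(st μ:ℂ)^2/4) * Complex.I_sq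

lemma hrtsum (μ : ℤ) : (rr μ : ℂ) + (tt μ : ℂ) = -(μ : ℂ) := by
  unfold rr tt; push_cast; ring

lemma hrtprod (μ : ℤ) (hμ : μ = 1 ∨ μ = -1) : (rr μ : ℂ) * (tt μ : ℂ) = -4 := by
  have h17 : (sq17 : ℂ) ^ 2 = 17 := by rw [← Complex.ofReal_pow, hsq17]; norm_num
  rcases hμ with h | h <;> subst h <;> unfold rr tt <;> push_cast <;>
    linear_combination (-1/4 : ℂ) * h17

lemma hfact (μ : ℤ) (hμ : μ = 1 ∨ μ = -1) :
    (P μ).map (Int.castRingHom ℂ) =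
      (Multiset.map (fun a => X - C a) ({z1 μ, z2 μ, z3 μ, z4 μ} : Multiset ℂ)).prod := by
  have : (Multiset.map (fun a => X - C a) ({z1 μ, z2 μ, z3 μ, z4 μ} : Multiset ℂ)).prod =
      (X - C (z1 μ)) * ((X - C (z2 μ)) * ((X - C (z3 μ)) * (X - C (z4 μ)))) := by
    simp [Multiset.insert_eq_cons]
  rw [this]
  apply Polynomial.funext
  intro x
  have h1 := hz12sum μ; have h2 := hz12prod μ hμ
  have h3 := hz34sum μ; have h4 := hz34prod μ hμ
  have h5 := hrtsum μ; have h6 := hrtprod μ hμ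
  simp only [P, Polynomial.eval_map, eval₂_add, eval₂_sub, eval₂_mul, eval₂_pow, eval₂_X,
    eval₂_C, eval₂_ofNat, Polynomial.eval_mul, Polynomial.eval_sub, Polynomial.eval_X,
    Polynomial.eval_C]
  simp only [Int.coe_castRingHom]
  push_cast
  linear_combination (-(x^2 - (z3 μ + z4 μ)*x + z3 μ * z4 μ)) * ((-x) * h1 + h2)
    + (-(x^2 + (rr μ:ℂ)*x + 2)) * ((-x)*h3 + h4) + (-(x^3 + 2*x))*h5 + (-x^2)*h6

lemma hroots (μ : ℤ) (hμ : μ = 1 ∨ μ = -1) :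
    ((P μ).map (Int.castRingHom ℂ)).roots = {z1 μ, z2 μ, z3 μ, z4 μ} := by
  rw [hfact μ hμ]
  exact Polynomial.roots_multiset_prod_X_sub_C _


noncomputable def Q (μ : ℤ) (α : Rg μ) : ℝ :=
  (1 / 2) * (((P μ).map (Int.castRingHom ℂ)).roots.attach.map
    (fun z => ‖AdjoinRoot.lift (Int.castRingHom ℂ) z.1
      (by
        have h2 : Polynomial.eval z.1 ((P μ).map (Int.castRingHom ℂ)) = 0 :=
          (Polynomial.mem_roots'.mp z.2).2
        rwa [Polynomial.eval_map] at h2) α‖ ^ 2)).sum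

lemma hzroot (μ : ℤ) (hμ : μ = 1 ∨ μ = -1) (z : ℂ) (hz : z ∈ ({z1 μ, z2 μ, z3 μ, z4 μ} : Multiset ℂ)) :
    Polynomial.eval₂ (Int.castRingHom ℂ) z (P μ) = 0 := by
  have hz' : z ∈ ((P μ).map (Int.castRingHom ℂ)).roots := by rw [hroots μ hμ]; exact hz
  have h2 := (Polynomial.mem_roots'.mp hz').2
  rwa [Polynomial.IsRoot, Polynomial.eval_map] at h2

noncomputable def phi (μ : ℤ) (z : ℂ) (h : Polynomial.eval₂ (Int.castRingHom ℂ) z (P μ) = 0) :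
    Rg μ →+* ℂ := AdjoinRoot.lift (Int.castRingHom ℂ) z h

noncomputable def g (μ : ℤ) (α : Rg μ) : ℂ → ℝ := fun z =>
  if h : Polynomial.eval₂ (Int.castRingHom ℂ) z (P μ) = 0 then ‖phi μ z h α‖ ^ 2 else 0

lemma Q_eq_map (μ : ℤ) (α : Rg μ) :
    Q μ α = (1 / 2) * (((P μ).map (Int.castRingHom ℂ)).roots.map (g μ α)).sum := by
  unfold Q
  congr 1
  rw [← Multiset.attach_map_val' _ (g μ α)]
  congr 1
  apply Multiset.map_congr rfl
  intro z hz
  have pf : Polynomial.eval₂ (Int.castRingHom ℂ) z.1 (P μ) = 0 := by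
    have h2 : Polynomial.eval z.1 ((P μ).map (Int.castRingHom ℂ)) = 0 :=
      (Polynomial.mem_roots'.mp z.2).2
    rwa [Polynomial.eval_map] at h2
  show _ = g μ α z.1
  rw [g, dif_pos pf]
  rfl

lemma z1_mem (μ : ℤ) : z1 μ ∈ ({z1 μ, z2 μ, z3 μ, z4 μ} : Multiset ℂ) := by
  simp [Multiset.insert_eq_cons]
lemma z2_mem (μ : ℤ) : z2 μ ∈ ({z1 μ, z2 μ, z3 μ, z4 μ} : Multiset ℂ) := by
  simp [Multiset.insert_eq_cons]
lemma z3_mem (μ : ℤ) : z3 μ ∈ ({z1 μ, z2 μ, z3 μ, z4 μ} : Multiset ℂ) := by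
  simp [Multiset.insert_eq_cons]
lemma z4_mem (μ : ℤ) : z4 μ ∈ ({z1 μ, z2 μ, z3 μ, z4 μ} : Multiset ℂ) := by
  simp [Multiset.insert_eq_cons]

lemma Q_explicit (μ : ℤ) (hμ : μ = 1 ∨ μ = -1) (α : Rg μ) :
    Q μ α = (1 / 2) *
      (‖phi μ (z1 μ) (hzroot μ hμ _ (z1_mem μ)) α‖ ^ 2 +
       ‖phi μ (z2 μ) (hzroot μ hμ _ (z2_mem μ)) α‖ ^ 2 +
       ‖phi μ (z3 μ) (hzroot μ hμ _ (z3_mem μ)) α‖ ^ 2 +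
       ‖phi μ (z4 μ) (hzroot μ hμ _ (z4_mem μ)) α‖ ^ 2) := by
  rw [Q_eq_map, hroots μ hμ]
  simp only [Multiset.insert_eq_cons, Multiset.map_cons, Multiset.map_singleton,
    Multiset.sum_cons, Multiset.sum_singleton]
  unfold g
  rw [dif_pos (hzroot μ hμ _ (z1_mem μ)), dif_pos (hzroot μ hμ _ (z2_mem μ)),
    dif_pos (hzroot μ hμ _ (z3_mem μ)), dif_pos (hzroot μ hμ _ (z4_mem μ))]
  ring

/- ## Part D : quadratic form computations -/

lemma KC (A B C D R z z' : ℂ) (h1 : z + z' = -R) (h2 : z * z' = 2) :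
    (A + B*z + C*z^2 + D*z^3) * (A + B*z' + C*z'^2 + D*z'^3) =
      A^2 + 2*B^2 + 4*C^2 + 8*D^2 - R*(A*B + 2*B*C + 4*C*D)
        + (R^2 - 4)*(A*C + 2*B*D) + (-R^3 + 6*R)*(A*D) := by
  have hz' : z' = -R - z := by linear_combination h1
  subst hz'
  have hz : z^2 = -R*z - 2 := by linear_combination -h2
  linear_combination ((-4)*D^2 + 2*D^2*z^2 - D^2*z^4 + 2*D^2*R*z - 2*D^2*R*z^3
    - D^2*R^2*z^2 + 2*C*D*R - C*D*R*z^2 - C*D*R^2*z - 2*C^2 + C^2*z^2 + C^2*R*z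
    + 4*B*D - 2*B*D*z^2 - 2*B*D*R*z - B*D*R^2 + B*C*R - B^2 - 3*A*D*R + 2*A*C) * hz

lemma SUMQ (A B C D R T m : ℂ) (h1 : R + T = -m) (h2 : R*T = -4) (hm : m^2 = 1) :
    (A^2 + 2*B^2 + 4*C^2 + 8*D^2 - R*(A*B + 2*B*C + 4*C*D)
        + (R^2 - 4)*(A*C + 2*B*D) + (-R^3 + 6*R)*(A*D))
    + (A^2 + 2*B^2 + 4*C^2 + 8*D^2 - T*(A*B + 2*B*C + 4*C*D)
        + (T^2 - 4)*(A*C + 2*B*D) + (-T^3 + 6*T)*(A*D)) =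
      2*(A^2 + 2*B^2 + 4*C^2 + 8*D^2) + m*(A*B + 2*B*C + 4*C*D)
        + (A*C + 2*B*D) + 7*m*(A*D) := by
  have hT : T = -m - R := by linear_combination h1
  subst hT
  have hR : R^2 = -m*R + 4 := by linear_combination -h2
  linear_combination (4*B*D + 3*A*D*m + 2*A*C) * hR + (2*B*D + A*D*m + A*C) * hm

lemma phi_mkelt (μ : ℤ) (z : ℂ) (h : Polynomial.eval₂ (Int.castRingHom ℂ) z (P μ) = 0)
    (a b c d : ℤ) :
    phi μ z h (mkelt μ a b c d) = (a:ℂ) + (b:ℂ)*z + (c:ℂ)*z^2 + (d:ℂ)*z^3 := by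
  unfold phi mkelt tau
  simp [map_add, map_mul, map_pow, map_intCast, AdjoinRoot.lift_root]

lemma hconj12 (μ : ℤ) : (starRingEnd ℂ) (z1 μ) = z2 μ := by
  unfold z1 z2
  simp [map_div₀, map_add, map_sub, map_mul, map_neg, map_ofNat, Complex.conj_ofReal,
    Complex.conj_I]
  ring

lemma hconj34 (μ : ℤ) : (starRingEnd ℂ) (z3 μ) = z4 μ := by
  unfold z3 z4
  simp [map_div₀, map_add, map_sub, map_mul, map_neg, map_ofNat, Complex.conj_ofReal,
    Complex.conj_I]
  ring

lemma hmuC (μ : ℤ) (hμ : μ = 1 ∨ μ = -1) : (μ:ℂ)^2 = 1 := by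
  rcases hμ with h | h <;> subst h <;> norm_num

noncomputable def Qint (μ a b c d : ℤ) : ℤ :=
  4*a^2 + 8*b^2 + 16*c^2 + 32*d^2 + 2*μ*(a*b + 2*b*c + 4*c*d) + 2*a*c + 4*b*d + 14*μ*a*d

lemma norm_sq_eq_conj (w : ℂ) : ‖w‖^2 = (w * (starRingEnd ℂ) w).re := by
  rw [Complex.mul_conj]
  simp [Complex.sq_norm]

lemma twoQ (μ : ℤ) (hμ : μ = 1 ∨ μ = -1) (a b c d : ℤ) :
    2 * Q μ (mkelt μ a b c d) = (Qint μ a b c d : ℝ) := by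
  rw [Q_explicit μ hμ]
  set w1 := phi μ (z1 μ) (hzroot μ hμ _ (z1_mem μ)) (mkelt μ a b c d) with hw1
  set w2 := phi μ (z2 μ) (hzroot μ hμ _ (z2_mem μ)) (mkelt μ a b c d) with hw2
  set w3 := phi μ (z3 μ) (hzroot μ hμ _ (z3_mem μ)) (mkelt μ a b c d) with hw3
  set w4 := phi μ (z4 μ) (hzroot μ hμ _ (z4_mem μ)) (mkelt μ a b c d) with hw4
  have e1 : w1 = (a:ℂ) + (b:ℂ)*(z1 μ) + (c:ℂ)*(z1 μ)^2 + (d:ℂ)*(z1 μ)^3 := phi_mkelt ..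
  have e2 : w2 = (a:ℂ) + (b:ℂ)*(z2 μ) + (c:ℂ)*(z2 μ)^2 + (d:ℂ)*(z2 μ)^3 := phi_mkelt ..
  have e3 : w3 = (a:ℂ) + (b:ℂ)*(z3 μ) + (c:ℂ)*(z3 μ)^2 + (d:ℂ)*(z3 μ)^3 := phi_mkelt ..
  have e4 : w4 = (a:ℂ) + (b:ℂ)*(z4 μ) + (c:ℂ)*(z4 μ)^2 + (d:ℂ)*(z4 μ)^3 := phi_mkelt ..
  have hc1 : (starRingEnd ℂ) w1 = w2 := by
    rw [e1, e2, map_add, map_add, map_add, map_mul, map_mul, map_mul, map_pow, map_pow,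
      map_intCast, map_intCast, map_intCast, map_intCast, hconj12]
  have hc3 : (starRingEnd ℂ) w3 = w4 := by
    rw [e3, e4, map_add, map_add, map_add, map_mul, map_mul, map_mul, map_pow, map_pow,
      map_intCast, map_intCast, map_intCast, map_intCast, hconj34]
  have hn1 : ‖w1‖^2 = (w1 * w2).re := by rw [norm_sq_eq_conj, hc1]
  have hn2 : ‖w2‖^2 = (w1 * w2).re := by
    have : ‖w2‖ = ‖w1‖ := by
      rw [← hc1, Complex.norm_conj]
    rw [this]; exact hn1
  have hn3 : ‖w3‖^2 = (w3 * w4).re := by rw [norm_sq_eq_conj, hc3]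
  have hn4 : ‖w4‖^2 = (w3 * w4).re := by
    have : ‖w4‖ = ‖w3‖ := by
      rw [← hc3, Complex.norm_conj]
    rw [this]; exact hn3
  have hKC1 : w1 * w2 =
      (a:ℂ)^2 + 2*(b:ℂ)^2 + 4*(c:ℂ)^2 + 8*(d:ℂ)^2
        - (rr μ:ℂ)*((a:ℂ)*(b:ℂ) + 2*(b:ℂ)*(c:ℂ) + 4*(c:ℂ)*(d:ℂ))
        + ((rr μ:ℂ)^2 - 4)*((a:ℂ)*(c:ℂ) + 2*(b:ℂ)*(d:ℂ))
        + (-(rr μ:ℂ)^3 + 6*(rr μ:ℂ))*((a:ℂ)*(d:ℂ)) := by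
    rw [e1, e2]; exact KC _ _ _ _ _ _ _ (hz12sum μ) (hz12prod μ hμ)
  have hKC3 : w3 * w4 =
      (a:ℂ)^2 + 2*(b:ℂ)^2 + 4*(c:ℂ)^2 + 8*(d:ℂ)^2
        - (tt μ:ℂ)*((a:ℂ)*(b:ℂ) + 2*(b:ℂ)*(c:ℂ) + 4*(c:ℂ)*(d:ℂ))
        + ((tt μ:ℂ)^2 - 4)*((a:ℂ)*(c:ℂ) + 2*(b:ℂ)*(d:ℂ))
        + (-(tt μ:ℂ)^3 + 6*(tt μ:ℂ))*((a:ℂ)*(d:ℂ)) := by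
    rw [e3, e4]; exact KC _ _ _ _ _ _ _ (hz34sum μ) (hz34prod μ hμ)
  have hsum : w1 * w2 + w3 * w4 = ((Qint μ a b c d : ℝ) : ℂ) / 2 := by
    rw [hKC1, hKC3,
      SUMQ (a:ℂ) (b:ℂ) (c:ℂ) (d:ℂ) (rr μ:ℂ) (tt μ:ℂ) (μ:ℂ) (hrtsum μ) (hrtprod μ hμ)
        (hmuC μ hμ)]
    unfold Qint
    push_cast
    ring
  rw [hn1, hn2, hn3, hn4]
  have : (w1*w2).re + (w1*w2).re + ((w3*w4).re + (w3*w4).re)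
      = ((w1*w2 + w3*w4) + (w1*w2 + w3*w4)).re := by simp [Complex.add_re]; ring
  calc 2 * (1/2 * ((w1*w2).re + (w1*w2).re + (w3*w4).re + (w3*w4).re))
      = ((w1*w2 + w3*w4) + (w1*w2 + w3*w4)).re := by rw [← this]; ring
    _ = (Qint μ a b c d : ℝ) := by
        rw [hsum]
        have : ((Qint μ a b c d : ℝ) : ℂ)/2 + ((Qint μ a b c d : ℝ) : ℂ)/2
            = ((Qint μ a b c d : ℝ) : ℂ) := by ring
        rw [this, Complex.ofReal_re]

lemma znorm2 (μ : ℤ) (hμ : μ = 1 ∨ μ = -1) :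
    ‖z1 μ‖^2 = 2 ∧ ‖z2 μ‖^2 = 2 ∧ ‖z3 μ‖^2 = 2 ∧ ‖z4 μ‖^2 = 2 := by
  have h12 := hz12prod μ hμ
  have h34 := hz34prod μ hμ
  have c12 := hconj12 μ
  have c34 := hconj34 μ
  refine ⟨?_, ?_, ?_, ?_⟩
  · rw [norm_sq_eq_conj, c12, h12]; norm_num
  · have : ‖z2 μ‖ = ‖z1 μ‖ := by
      rw [← c12, Complex.norm_conj]
    rw [this, norm_sq_eq_conj, c12, h12]; norm_num
  · rw [norm_sq_eq_conj, c34, h34]; norm_num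
  · have : ‖z4 μ‖ = ‖z3 μ‖ := by
      rw [← c34, Complex.norm_conj]
    rw [this, norm_sq_eq_conj, c34, h34]; norm_num

lemma phi_tau (μ : ℤ) (z : ℂ) (h : Polynomial.eval₂ (Int.castRingHom ℂ) z (P μ) = 0) :
    phi μ z h (tau μ) = z := AdjoinRoot.lift_root h

lemma Q_tau_mul (μ : ℤ) (hμ : μ = 1 ∨ μ = -1) (β : Rg μ) :
    Q μ (tau μ * β) = 2 * Q μ β := by
  obtain ⟨k1, k2, k3, k4⟩ := znorm2 μ hμ
  rw [Q_explicit μ hμ, Q_explicit μ hμ]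
  simp only [map_mul, phi_tau, norm_mul, mul_pow]
  rw [k1, k2, k3, k4]
  ring

/- ## Part E : norm machinery -/

noncomputable def Phi (μ : ℤ) (hμ : μ = 1 ∨ μ = -1) (α : Rg μ) : EuclideanSpace ℂ (Fin 4) :=
  (WithLp.equiv 2 (Fin 4 → ℂ)).symm
    ![phi μ (z1 μ) (hzroot μ hμ _ (z1_mem μ)) α,
      phi μ (z2 μ) (hzroot μ hμ _ (z2_mem μ)) α,
      phi μ (z3 μ) (hzroot μ hμ _ (z3_mem μ)) α,
      phi μ (z4 μ) (hzroot μ hμ _ (z4_mem μ)) α]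

lemma Phi_norm (μ : ℤ) (hμ : μ = 1 ∨ μ = -1) (α : Rg μ) :
    ‖Phi μ hμ α‖ = Real.sqrt (2 * Q μ α) := by
  rw [EuclideanSpace.norm_eq]
  congr 1
  rw [Fin.sum_univ_four]
  unfold Phi
  simp only [WithLp.equiv_symm_apply, WithLp.ofLp_toLp, Matrix.cons_val_zero, Matrix.cons_val_one,
    Matrix.head_cons, Matrix.cons_val_two, Matrix.tail_cons, Matrix.cons_val_three]
  rw [Q_explicit μ hμ]
  ring

lemma Phi_sub (μ : ℤ) (hμ : μ = 1 ∨ μ = -1) (α β : Rg μ) :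
    Phi μ hμ (α - β) = Phi μ hμ α - Phi μ hμ β := by
  ext i
  unfold Phi
  fin_cases i <;>
    simp [WithLp.equiv_symm_apply, PiLp.sub_apply, map_sub]

lemma Q_nonneg (μ : ℤ) (hμ : μ = 1 ∨ μ = -1) (α : Rg μ) : 0 ≤ Q μ α := by
  rw [Q_explicit μ hμ]
  positivity

lemma sqrt_tri (μ : ℤ) (hμ : μ = 1 ∨ μ = -1) (α β : Rg μ) :
    Real.sqrt (2 * Q μ (α - β)) ≤ Real.sqrt (2 * Q μ α) + Real.sqrt (2 * Q μ β) := by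
  rw [← Phi_norm μ hμ, ← Phi_norm μ hμ, ← Phi_norm μ hμ, Phi_sub μ hμ]
  exact norm_sub_le _ _

lemma Q_tausq_mul (μ : ℤ) (hμ : μ = 1 ∨ μ = -1) (β : Rg μ) :
    Q μ (tau μ ^ 2 * β) = 4 * Q μ β := by
  have : tau μ ^ 2 * β = tau μ * (tau μ * β) := by ring
  rw [this, Q_tau_mul μ hμ, Q_tau_mul μ hμ]
  ring

/- ## Part F : division and digit selection -/

lemma DIV (μ d1 d2 x y c d : ℤ) :
    mkelt μ (d1 + 4*x) (d2 - 2*μ*x + 4*y) c d =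
      mkelt μ d1 d2 0 0 +
        tau μ ^ 2 * mkelt μ (c + 2*μ*y) (d + μ*x) (μ*y - x) (-y) := by
  have h := htau4 μ
  unfold mkelt
  push_cast at h ⊢
  linear_combination ((x:Rg μ) + (y:Rg μ) * tau μ) * h

lemma DIV0 (μ x b c d : ℤ) :
    mkelt μ (4*x) b c d = tau μ * mkelt μ (b + 2*μ*x) c (d + μ*x) (-x) := by
  have h := htau4 μ
  unfold mkelt
  push_cast at h ⊢
  linear_combination ((x:Rg μ)) * h


lemma select (μ : ℤ) (hμ : μ = 1 ∨ μ = -1) (j₁ j₂ : ℕ) (a b : ℤ) (ha : ¬ (a % 4 = 0)) :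
    ∃ d1 d2 : ℤ, mkelt μ d1 d2 0 0 ∈ Dtil μ j₁ j₂ ∧ Qint μ d1 d2 0 0 ≤ 40 ∧
      ∃ x y : ℤ, a = d1 + 4*x ∧ b = d2 - 2*μ*x + 4*y := by
  rcases hμ with rfl | rfl
  ·
    have ha4 : a % 4 = 1 ∨ a % 4 = 2 ∨ a % 4 = 3 := by omega
    rcases ha4 with h4 | h4 | h4
    · have hk : (b + 2*(1)*((a-1)/4)) % 4 = 0 ∨ (b + 2*(1)*((a-1)/4)) % 4 = 1 ∨
          (b + 2*(1)*((a-1)/4)) % 4 = 2 ∨ (b + 2*(1)*((a-1)/4)) % 4 = 3 := by omega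
      rcases hk with hk | hk | hk | hk
      · refine ⟨1, 0, ?_, by norm_num [Qint], (a-1)/4, (b - 0 + 2*(1)*((a-1)/4))/4,
          by omega, by omega⟩
        have he : mkelt (1) 1 0 0 0 = (1 : Rg (1)) := by unfold mkelt; push_cast; ring
        rw [he]; unfold Dtil; exact Set.mem_insert_of_mem _ (Set.mem_insert _ _)
      · refine ⟨1, 1, ?_, by norm_num [Qint], (a-1)/4, (b - 1 + 2*(1)*((a-1)/4))/4,
          by omega, by omega⟩
        have he : mkelt (1) 1 1 0 0 = 1 + tau (1) := by unfold mkelt; push_cast; ring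
        rw [he]; unfold Dtil; exact Set.mem_insert_of_mem _ (Set.mem_insert_of_mem _ (Set.mem_insert_of_mem _ (Set.mem_insert_of_mem _ (Set.mem_insert_of_mem _ (Set.mem_insert _ _)))))
      · rcases Nat.even_or_odd (j₂ / 2) with hp | hp
        · refine ⟨1, 2*(1), ?_, by norm_num [Qint], (a-1)/4, (b - 2*(1) + 2*(1)*((a-1)/4))/4,
            by omega, by omega⟩
          have he : mkelt (1) 1 (2*(1)) 0 0
              = 1 + 2*(((1) : ℤ) : Rg (1))*(-1 : Rg (1))^(j₂/2)*tau (1) := by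
            unfold mkelt; rw [Even.neg_one_pow hp]; push_cast; ring
          rw [he]; unfold Dtil; exact Set.mem_insert_of_mem _ (Set.mem_insert_of_mem _ (Set.mem_insert_of_mem _ (Set.mem_insert_of_mem _ (Set.mem_insert_of_mem _ (Set.mem_insert_of_mem _ (Set.mem_insert_of_mem _ (Set.mem_insert_of_mem _ (Set.mem_insert_of_mem _ (Set.mem_insert_of_mem _ (Set.mem_insert_of_mem _ (Set.mem_insert _ _)))))))))))
        · refine ⟨1, -(2*(1)), ?_, by norm_num [Qint], (a-1)/4, (b + 2*(1) + 2*(1)*((a-1)/4))/4,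
            by omega, by omega⟩
          have he : mkelt (1) 1 (-(2*(1))) 0 0
              = 1 + 2*(((1) : ℤ) : Rg (1))*(-1 : Rg (1))^(j₂/2)*tau (1) := by
            unfold mkelt; rw [Odd.neg_one_pow hp]; push_cast; ring
          rw [he]; unfold Dtil; exact Set.mem_insert_of_mem _ (Set.mem_insert_of_mem _ (Set.mem_insert_of_mem _ (Set.mem_insert_of_mem _ (Set.mem_insert_of_mem _ (Set.mem_insert_of_mem _ (Set.mem_insert_of_mem _ (Set.mem_insert_of_mem _ (Set.mem_insert_of_mem _ (Set.mem_insert_of_mem _ (Set.mem_insert_of_mem _ (Set.mem_insert _ _)))))))))))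
      · refine ⟨1, -1, ?_, by norm_num [Qint], (a-1)/4, (b + 1 + 2*(1)*((a-1)/4))/4,
          by omega, by omega⟩
        have he : mkelt (1) 1 (-1) 0 0 = 1 - tau (1) := by unfold mkelt; push_cast; ring
        rw [he]; unfold Dtil; exact Set.mem_insert_of_mem _ (Set.mem_insert_of_mem _ (Set.mem_insert_of_mem _ (Set.mem_insert_of_mem _ (Set.mem_insert_of_mem _ (Set.mem_insert_of_mem _ (Set.mem_insert _ _))))))
    · have hk : (b + 2*(1)*((a-2)/4)) % 4 = 0 ∨ (b + 2*(1)*((a-2)/4)) % 4 = 1 ∨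
          (b + 2*(1)*((a-2)/4)) % 4 = 2 ∨ (b + 2*(1)*((a-2)/4)) % 4 = 3 := by omega
      rcases hk with hk | hk | hk | hk
      · refine ⟨2, 0, ?_, by norm_num [Qint], (a-2)/4, (b - 0 + 2*(1)*((a-2)/4))/4,
          by omega, by omega⟩
        have he : mkelt (1) 2 0 0 0 = (2 : Rg (1)) := by unfold mkelt; push_cast; ring
        rw [he]; unfold Dtil; exact Set.mem_insert_of_mem _ (Set.mem_insert_of_mem _ (Set.mem_insert_of_mem _ (Set.mem_insert _ _)))
      · rcases Nat.even_or_odd (j₁ / 2) with hp | hp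
        · refine ⟨2, 1, ?_, by norm_num [Qint], (a-2)/4, (b - 1 + 2*(1)*((a-2)/4))/4,
            by omega, by omega⟩
          have he : mkelt (1) 2 1 0 0 = (-1 : Rg (1))^(j₁/2) * (2 + tau (1)) := by
            unfold mkelt; rw [Even.neg_one_pow hp]; push_cast; ring
          rw [he]; unfold Dtil; exact Set.mem_insert_of_mem _ (Set.mem_insert_of_mem _ (Set.mem_insert_of_mem _ (Set.mem_insert_of_mem _ (Set.mem_insert_of_mem _ (Set.mem_insert_of_mem _ (Set.mem_insert_of_mem _ (Set.mem_insert_of_mem _ (Set.mem_insert_of_mem _ (Set.mem_insert _ _)))))))))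
        · refine ⟨-2, -1, ?_, by norm_num [Qint], (a+2)/4, (b + 1 + 2*(1)*((a+2)/4))/4,
            by omega, by omega⟩
          have he : mkelt (1) (-2) (-1) 0 0 = (-1 : Rg (1))^(j₁/2) * (2 + tau (1)) := by
            unfold mkelt; rw [Odd.neg_one_pow hp]; push_cast; ring
          rw [he]; unfold Dtil; exact Set.mem_insert_of_mem _ (Set.mem_insert_of_mem _ (Set.mem_insert_of_mem _ (Set.mem_insert_of_mem _ (Set.mem_insert_of_mem _ (Set.mem_insert_of_mem _ (Set.mem_insert_of_mem _ (Set.mem_insert_of_mem _ (Set.mem_insert_of_mem _ (Set.mem_insert _ _)))))))))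
      · refine ⟨-2, 0, ?_, by norm_num [Qint], (a+2)/4, (b - 0 + 2*(1)*((a+2)/4))/4,
          by omega, by omega⟩
        have he : mkelt (1) (-2) 0 0 0 = (-2 : Rg (1)) := by unfold mkelt; push_cast; ring
        rw [he]; unfold Dtil; exact Set.mem_insert_of_mem _ (Set.mem_insert_of_mem _ (Set.mem_insert_of_mem _ (Set.mem_insert_of_mem _ (Set.mem_insert _ _))))
      · rcases Nat.even_or_odd j₁ with hp | hp
        · refine ⟨2, -1, ?_, by norm_num [Qint], (a-2)/4, (b + 1 + 2*(1)*((a-2)/4))/4,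
            by omega, by omega⟩
          have he : mkelt (1) 2 (-1) 0 0 = (-1 : Rg (1))^j₁ * (2 - tau (1)) := by
            unfold mkelt; rw [Even.neg_one_pow hp]; push_cast; ring
          rw [he]; unfold Dtil; exact Set.mem_insert_of_mem _ (Set.mem_insert_of_mem _ (Set.mem_insert_of_mem _ (Set.mem_insert_of_mem _ (Set.mem_insert_of_mem _ (Set.mem_insert_of_mem _ (Set.mem_insert_of_mem _ (Set.mem_insert_of_mem _ (Set.mem_insert_of_mem _ (Set.mem_insert_of_mem _ (Set.mem_insert _ _))))))))))
        · refine ⟨-2, 1, ?_, by norm_num [Qint], (a+2)/4, (b - 1 + 2*(1)*((a+2)/4))/4,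
            by omega, by omega⟩
          have he : mkelt (1) (-2) 1 0 0 = (-1 : Rg (1))^j₁ * (2 - tau (1)) := by
            unfold mkelt; rw [Odd.neg_one_pow hp]; push_cast; ring
          rw [he]; unfold Dtil; exact Set.mem_insert_of_mem _ (Set.mem_insert_of_mem _ (Set.mem_insert_of_mem _ (Set.mem_insert_of_mem _ (Set.mem_insert_of_mem _ (Set.mem_insert_of_mem _ (Set.mem_insert_of_mem _ (Set.mem_insert_of_mem _ (Set.mem_insert_of_mem _ (Set.mem_insert_of_mem _ (Set.mem_insert _ _))))))))))
    · have hk : (b + 2*(1)*((a+1)/4)) % 4 = 0 ∨ (b + 2*(1)*((a+1)/4)) % 4 = 1 ∨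
          (b + 2*(1)*((a+1)/4)) % 4 = 2 ∨ (b + 2*(1)*((a+1)/4)) % 4 = 3 := by omega
      rcases hk with hk | hk | hk | hk
      · refine ⟨-1, 0, ?_, by norm_num [Qint], (a+1)/4, (b - 0 + 2*(1)*((a+1)/4))/4,
          by omega, by omega⟩
        have he : mkelt (1) (-1) 0 0 0 = (-1 : Rg (1)) := by unfold mkelt; push_cast; ring
        rw [he]; unfold Dtil; exact Set.mem_insert_of_mem _ (Set.mem_insert_of_mem _ (Set.mem_insert _ _))
      · refine ⟨-1, 1, ?_, by norm_num [Qint], (a+1)/4, (b - 1 + 2*(1)*((a+1)/4))/4,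
          by omega, by omega⟩
        have he : mkelt (1) (-1) 1 0 0 = -1 + tau (1) := by unfold mkelt; push_cast; ring
        rw [he]; unfold Dtil; exact Set.mem_insert_of_mem _ (Set.mem_insert_of_mem _ (Set.mem_insert_of_mem _ (Set.mem_insert_of_mem _ (Set.mem_insert_of_mem _ (Set.mem_insert_of_mem _ (Set.mem_insert_of_mem _ (Set.mem_insert _ _)))))))
      · rcases Nat.even_or_odd j₂ with hp | hp
        · refine ⟨-1, 2*(1), ?_, by norm_num [Qint], (a+1)/4, (b - 2*(1) + 2*(1)*((a+1)/4))/4,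
            by omega, by omega⟩
          have he : mkelt (1) (-1) (2*(1)) 0 0
              = -1 + 2*(((1) : ℤ) : Rg (1))*(-1 : Rg (1))^j₂*tau (1) := by
            unfold mkelt; rw [Even.neg_one_pow hp]; push_cast; ring
          rw [he]; unfold Dtil; exact Set.mem_insert_of_mem _ (Set.mem_insert_of_mem _ (Set.mem_insert_of_mem _ (Set.mem_insert_of_mem _ (Set.mem_insert_of_mem _ (Set.mem_insert_of_mem _ (Set.mem_insert_of_mem _ (Set.mem_insert_of_mem _ (Set.mem_insert_of_mem _ (Set.mem_insert_of_mem _ (Set.mem_insert_of_mem _ (Set.mem_insert_of_mem _ (Set.mem_singleton _))))))))))))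
        · refine ⟨-1, -(2*(1)), ?_, by norm_num [Qint], (a+1)/4, (b + 2*(1) + 2*(1)*((a+1)/4))/4,
            by omega, by omega⟩
          have he : mkelt (1) (-1) (-(2*(1))) 0 0
              = -1 + 2*(((1) : ℤ) : Rg (1))*(-1 : Rg (1))^j₂*tau (1) := by
            unfold mkelt; rw [Odd.neg_one_pow hp]; push_cast; ring
          rw [he]; unfold Dtil; exact Set.mem_insert_of_mem _ (Set.mem_insert_of_mem _ (Set.mem_insert_of_mem _ (Set.mem_insert_of_mem _ (Set.mem_insert_of_mem _ (Set.mem_insert_of_mem _ (Set.mem_insert_of_mem _ (Set.mem_insert_of_mem _ (Set.mem_insert_of_mem _ (Set.mem_insert_of_mem _ (Set.mem_insert_of_mem _ (Set.mem_insert_of_mem _ (Set.mem_singleton _))))))))))))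
      · refine ⟨-1, -1, ?_, by norm_num [Qint], (a+1)/4, (b + 1 + 2*(1)*((a+1)/4))/4,
          by omega, by omega⟩
        have he : mkelt (1) (-1) (-1) 0 0 = -1 - tau (1) := by unfold mkelt; push_cast; ring
        rw [he]; unfold Dtil; exact Set.mem_insert_of_mem _ (Set.mem_insert_of_mem _ (Set.mem_insert_of_mem _ (Set.mem_insert_of_mem _ (Set.mem_insert_of_mem _ (Set.mem_insert_of_mem _ (Set.mem_insert_of_mem _ (Set.mem_insert_of_mem _ (Set.mem_insert _ _))))))))
  ·
    have ha4 : a % 4 = 1 ∨ a % 4 = 2 ∨ a % 4 = 3 := by omega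
    rcases ha4 with h4 | h4 | h4
    · have hk : (b + 2*(-1)*((a-1)/4)) % 4 = 0 ∨ (b + 2*(-1)*((a-1)/4)) % 4 = 1 ∨
          (b + 2*(-1)*((a-1)/4)) % 4 = 2 ∨ (b + 2*(-1)*((a-1)/4)) % 4 = 3 := by omega
      rcases hk with hk | hk | hk | hk
      · refine ⟨1, 0, ?_, by norm_num [Qint], (a-1)/4, (b - 0 + 2*(-1)*((a-1)/4))/4,
          by omega, by omega⟩
        have he : mkelt (-1) 1 0 0 0 = (1 : Rg (-1)) := by unfold mkelt; push_cast; ring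
        rw [he]; unfold Dtil; exact Set.mem_insert_of_mem _ (Set.mem_insert _ _)
      · refine ⟨1, 1, ?_, by norm_num [Qint], (a-1)/4, (b - 1 + 2*(-1)*((a-1)/4))/4,
          by omega, by omega⟩
        have he : mkelt (-1) 1 1 0 0 = 1 + tau (-1) := by unfold mkelt; push_cast; ring
        rw [he]; unfold Dtil; exact Set.mem_insert_of_mem _ (Set.mem_insert_of_mem _ (Set.mem_insert_of_mem _ (Set.mem_insert_of_mem _ (Set.mem_insert_of_mem _ (Set.mem_insert _ _)))))
      · rcases Nat.even_or_odd (j₂ / 2) with hp | hp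
        · refine ⟨1, 2*(-1), ?_, by norm_num [Qint], (a-1)/4, (b - 2*(-1) + 2*(-1)*((a-1)/4))/4,
            by omega, by omega⟩
          have he : mkelt (-1) 1 (2*(-1)) 0 0
              = 1 + 2*(((-1) : ℤ) : Rg (-1))*(-1 : Rg (-1))^(j₂/2)*tau (-1) := by
            unfold mkelt; rw [Even.neg_one_pow hp]; push_cast; ring
          rw [he]; unfold Dtil; exact Set.mem_insert_of_mem _ (Set.mem_insert_of_mem _ (Set.mem_insert_of_mem _ (Set.mem_insert_of_mem _ (Set.mem_insert_of_mem _ (Set.mem_insert_of_mem _ (Set.mem_insert_of_mem _ (Set.mem_insert_of_mem _ (Set.mem_insert_of_mem _ (Set.mem_insert_of_mem _ (Set.mem_insert_of_mem _ (Set.mem_insert _ _)))))))))))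
        · refine ⟨1, -(2*(-1)), ?_, by norm_num [Qint], (a-1)/4, (b + 2*(-1) + 2*(-1)*((a-1)/4))/4,
            by omega, by omega⟩
          have he : mkelt (-1) 1 (-(2*(-1))) 0 0
              = 1 + 2*(((-1) : ℤ) : Rg (-1))*(-1 : Rg (-1))^(j₂/2)*tau (-1) := by
            unfold mkelt; rw [Odd.neg_one_pow hp]; push_cast; ring
          rw [he]; unfold Dtil; exact Set.mem_insert_of_mem _ (Set.mem_insert_of_mem _ (Set.mem_insert_of_mem _ (Set.mem_insert_of_mem _ (Set.mem_insert_of_mem _ (Set.mem_insert_of_mem _ (Set.mem_insert_of_mem _ (Set.mem_insert_of_mem _ (Set.mem_insert_of_mem _ (Set.mem_insert_of_mem _ (Set.mem_insert_of_mem _ (Set.mem_insert _ _)))))))))))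
      · refine ⟨1, -1, ?_, by norm_num [Qint], (a-1)/4, (b + 1 + 2*(-1)*((a-1)/4))/4,
          by omega, by omega⟩
        have he : mkelt (-1) 1 (-1) 0 0 = 1 - tau (-1) := by unfold mkelt; push_cast; ring
        rw [he]; unfold Dtil; exact Set.mem_insert_of_mem _ (Set.mem_insert_of_mem _ (Set.mem_insert_of_mem _ (Set.mem_insert_of_mem _ (Set.mem_insert_of_mem _ (Set.mem_insert_of_mem _ (Set.mem_insert _ _))))))
    · have hk : (b + 2*(-1)*((a-2)/4)) % 4 = 0 ∨ (b + 2*(-1)*((a-2)/4)) % 4 = 1 ∨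
          (b + 2*(-1)*((a-2)/4)) % 4 = 2 ∨ (b + 2*(-1)*((a-2)/4)) % 4 = 3 := by omega
      rcases hk with hk | hk | hk | hk
      · refine ⟨2, 0, ?_, by norm_num [Qint], (a-2)/4, (b - 0 + 2*(-1)*((a-2)/4))/4,
          by omega, by omega⟩
        have he : mkelt (-1) 2 0 0 0 = (2 : Rg (-1)) := by unfold mkelt; push_cast; ring
        rw [he]; unfold Dtil; exact Set.mem_insert_of_mem _ (Set.mem_insert_of_mem _ (Set.mem_insert_of_mem _ (Set.mem_insert _ _)))
      · rcases Nat.even_or_odd (j₁ / 2) with hp | hp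
        · refine ⟨2, 1, ?_, by norm_num [Qint], (a-2)/4, (b - 1 + 2*(-1)*((a-2)/4))/4,
            by omega, by omega⟩
          have he : mkelt (-1) 2 1 0 0 = (-1 : Rg (-1))^(j₁/2) * (2 + tau (-1)) := by
            unfold mkelt; rw [Even.neg_one_pow hp]; push_cast; ring
          rw [he]; unfold Dtil; exact Set.mem_insert_of_mem _ (Set.mem_insert_of_mem _ (Set.mem_insert_of_mem _ (Set.mem_insert_of_mem _ (Set.mem_insert_of_mem _ (Set.mem_insert_of_mem _ (Set.mem_insert_of_mem _ (Set.mem_insert_of_mem _ (Set.mem_insert_of_mem _ (Set.mem_insert _ _)))))))))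
        · refine ⟨-2, -1, ?_, by norm_num [Qint], (a+2)/4, (b + 1 + 2*(-1)*((a+2)/4))/4,
            by omega, by omega⟩
          have he : mkelt (-1) (-2) (-1) 0 0 = (-1 : Rg (-1))^(j₁/2) * (2 + tau (-1)) := by
            unfold mkelt; rw [Odd.neg_one_pow hp]; push_cast; ring
          rw [he]; unfold Dtil; exact Set.mem_insert_of_mem _ (Set.mem_insert_of_mem _ (Set.mem_insert_of_mem _ (Set.mem_insert_of_mem _ (Set.mem_insert_of_mem _ (Set.mem_insert_of_mem _ (Set.mem_insert_of_mem _ (Set.mem_insert_of_mem _ (Set.mem_insert_of_mem _ (Set.mem_insert _ _)))))))))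
      · refine ⟨-2, 0, ?_, by norm_num [Qint], (a+2)/4, (b - 0 + 2*(-1)*((a+2)/4))/4,
          by omega, by omega⟩
        have he : mkelt (-1) (-2) 0 0 0 = (-2 : Rg (-1)) := by unfold mkelt; push_cast; ring
        rw [he]; unfold Dtil; exact Set.mem_insert_of_mem _ (Set.mem_insert_of_mem _ (Set.mem_insert_of_mem _ (Set.mem_insert_of_mem _ (Set.mem_insert _ _))))
      · rcases Nat.even_or_odd j₁ with hp | hp
        · refine ⟨2, -1, ?_, by norm_num [Qint], (a-2)/4, (b + 1 + 2*(-1)*((a-2)/4))/4,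
            by omega, by omega⟩
          have he : mkelt (-1) 2 (-1) 0 0 = (-1 : Rg (-1))^j₁ * (2 - tau (-1)) := by
            unfold mkelt; rw [Even.neg_one_pow hp]; push_cast; ring
          rw [he]; unfold Dtil; exact Set.mem_insert_of_mem _ (Set.mem_insert_of_mem _ (Set.mem_insert_of_mem _ (Set.mem_insert_of_mem _ (Set.mem_insert_of_mem _ (Set.mem_insert_of_mem _ (Set.mem_insert_of_mem _ (Set.mem_insert_of_mem _ (Set.mem_insert_of_mem _ (Set.mem_insert_of_mem _ (Set.mem_insert _ _))))))))))
        · refine ⟨-2, 1, ?_, by norm_num [Qint], (a+2)/4, (b - 1 + 2*(-1)*((a+2)/4))/4,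
            by omega, by omega⟩
          have he : mkelt (-1) (-2) 1 0 0 = (-1 : Rg (-1))^j₁ * (2 - tau (-1)) := by
            unfold mkelt; rw [Odd.neg_one_pow hp]; push_cast; ring
          rw [he]; unfold Dtil; exact Set.mem_insert_of_mem _ (Set.mem_insert_of_mem _ (Set.mem_insert_of_mem _ (Set.mem_insert_of_mem _ (Set.mem_insert_of_mem _ (Set.mem_insert_of_mem _ (Set.mem_insert_of_mem _ (Set.mem_insert_of_mem _ (Set.mem_insert_of_mem _ (Set.mem_insert_of_mem _ (Set.mem_insert _ _))))))))))
    · have hk : (b + 2*(-1)*((a+1)/4)) % 4 = 0 ∨ (b + 2*(-1)*((a+1)/4)) % 4 = 1 ∨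
          (b + 2*(-1)*((a+1)/4)) % 4 = 2 ∨ (b + 2*(-1)*((a+1)/4)) % 4 = 3 := by omega
      rcases hk with hk | hk | hk | hk
      · refine ⟨-1, 0, ?_, by norm_num [Qint], (a+1)/4, (b - 0 + 2*(-1)*((a+1)/4))/4,
          by omega, by omega⟩
        have he : mkelt (-1) (-1) 0 0 0 = (-1 : Rg (-1)) := by unfold mkelt; push_cast; ring
        rw [he]; unfold Dtil; exact Set.mem_insert_of_mem _ (Set.mem_insert_of_mem _ (Set.mem_insert _ _))
      · refine ⟨-1, 1, ?_, by norm_num [Qint], (a+1)/4, (b - 1 + 2*(-1)*((a+1)/4))/4,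
          by omega, by omega⟩
        have he : mkelt (-1) (-1) 1 0 0 = -1 + tau (-1) := by unfold mkelt; push_cast; ring
        rw [he]; unfold Dtil; exact Set.mem_insert_of_mem _ (Set.mem_insert_of_mem _ (Set.mem_insert_of_mem _ (Set.mem_insert_of_mem _ (Set.mem_insert_of_mem _ (Set.mem_insert_of_mem _ (Set.mem_insert_of_mem _ (Set.mem_insert _ _)))))))
      · rcases Nat.even_or_odd j₂ with hp | hp
        · refine ⟨-1, 2*(-1), ?_, by norm_num [Qint], (a+1)/4, (b - 2*(-1) + 2*(-1)*((a+1)/4))/4,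
            by omega, by omega⟩
          have he : mkelt (-1) (-1) (2*(-1)) 0 0
              = -1 + 2*(((-1) : ℤ) : Rg (-1))*(-1 : Rg (-1))^j₂*tau (-1) := by
            unfold mkelt; rw [Even.neg_one_pow hp]; push_cast; ring
          rw [he]; unfold Dtil; exact Set.mem_insert_of_mem _ (Set.mem_insert_of_mem _ (Set.mem_insert_of_mem _ (Set.mem_insert_of_mem _ (Set.mem_insert_of_mem _ (Set.mem_insert_of_mem _ (Set.mem_insert_of_mem _ (Set.mem_insert_of_mem _ (Set.mem_insert_of_mem _ (Set.mem_insert_of_mem _ (Set.mem_insert_of_mem _ (Set.mem_insert_of_mem _ (Set.mem_singleton _))))))))))))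
        · refine ⟨-1, -(2*(-1)), ?_, by norm_num [Qint], (a+1)/4, (b + 2*(-1) + 2*(-1)*((a+1)/4))/4,
            by omega, by omega⟩
          have he : mkelt (-1) (-1) (-(2*(-1))) 0 0
              = -1 + 2*(((-1) : ℤ) : Rg (-1))*(-1 : Rg (-1))^j₂*tau (-1) := by
            unfold mkelt; rw [Odd.neg_one_pow hp]; push_cast; ring
          rw [he]; unfold Dtil; exact Set.mem_insert_of_mem _ (Set.mem_insert_of_mem _ (Set.mem_insert_of_mem _ (Set.mem_insert_of_mem _ (Set.mem_insert_of_mem _ (Set.mem_insert_of_mem _ (Set.mem_insert_of_mem _ (Set.mem_insert_of_mem _ (Set.mem_insert_of_mem _ (Set.mem_insert_of_mem _ (Set.mem_insert_of_mem _ (Set.mem_insert_of_mem _ (Set.mem_singleton _))))))))))))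
      · refine ⟨-1, -1, ?_, by norm_num [Qint], (a+1)/4, (b + 1 + 2*(-1)*((a+1)/4))/4,
          by omega, by omega⟩
        have he : mkelt (-1) (-1) (-1) 0 0 = -1 - tau (-1) := by unfold mkelt; push_cast; ring
        rw [he]; unfold Dtil; exact Set.mem_insert_of_mem _ (Set.mem_insert_of_mem _ (Set.mem_insert_of_mem _ (Set.mem_insert_of_mem _ (Set.mem_insert_of_mem _ (Set.mem_insert_of_mem _ (Set.mem_insert_of_mem _ (Set.mem_insert_of_mem _ (Set.mem_insert _ _))))))))

/- ## Part G : assembly -/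

noncomputable def consd {X : Type*} (d0 : X) (c : ℕ → X) : ℕ → X := fun i => Nat.casesOn i d0 c

@[simp] lemma consd_zero {X : Type*} (d0 : X) (c : ℕ → X) : consd d0 c 0 = d0 := rfl
@[simp] lemma consd_succ {X : Type*} (d0 : X) (c : ℕ → X) (i : ℕ) : consd d0 c (i+1) = c i := rfl

lemma sum_cons (μ : ℤ) (ℓ : ℕ) (c : ℕ → Rg μ) (d0 : Rg μ) :
    ∑ i ∈ Finset.range (ℓ+1), consd d0 c i * tau μ ^ i
      = d0 + tau μ * ∑ i ∈ Finset.range ℓ, c i * tau μ ^ i := by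
  rw [Finset.sum_range_succ']
  simp only [consd_succ, consd_zero, pow_zero, mul_one]
  rw [Finset.mul_sum, add_comm]
  congr 1
  apply Finset.sum_congr rfl
  intro i _
  ring

lemma mem0 (μ : ℤ) (j₁ j₂ : ℕ) : (0 : Rg μ) ∈ Dtil μ j₁ j₂ := by
  unfold Dtil; exact Set.mem_insert _ _

lemma sqrt_lt_sqrt_imp (x y : ℝ) (hx : 0 ≤ x) (hy : 0 ≤ y)
    (h : Real.sqrt x < Real.sqrt y) : x < y := by
  nlinarith [Real.sq_sqrt hx, Real.sq_sqrt hy, Real.sqrt_nonneg x, Real.sqrt_nonneg y]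

lemma main_ind (μ : ℤ) (hμ : μ = 1 ∨ μ = -1) (j₁ j₂ : ℕ) :
    ∀ n : ℕ, ∀ α : Rg μ, 2 * Q μ α ≤ (n : ℝ) →
    ∃ (ℓ : ℕ) (c : ℕ → Rg μ) (β : Rg μ),
      (∀ i < ℓ, c i ∈ Dtil μ j₁ j₂) ∧
      (∀ i, i + 1 < ℓ → c i = 0 ∨ c (i + 1) = 0) ∧
      Q μ β ≤ 20 ∧
      α = (∑ i ∈ Finset.range ℓ, c i * tau μ ^ i) + tau μ ^ ℓ * β := by
  intro n
  induction n using Nat.strong_induction_on with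
  | _ n IH =>
    intro α hn
    rcases le_or_gt (Q μ α) 20 with hq | hq
    · exact ⟨0, fun _ => 0, α, by omega, by omega, hq, by simp⟩
    obtain ⟨a, b, c0, d0, hα⟩ := rep μ α
    -- n is large
    have hQα : (2 : ℝ) * Q μ α > 40 := by linarith
    have hn41 : 41 ≤ n := by
      have : (40 : ℝ) < (n : ℝ) := by linarith
      have h40 : (40:ℕ) < n := by exact_mod_cast this
      omega
    by_cases hdiv : a % 4 = 0
    · -- divide by tau
      have ha4 : a = 4 * (a / 4) := by omega
      set β' := mkelt μ (b + 2*μ*(a/4)) c0 (d0 + μ*(a/4)) (-(a/4)) with hβ'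
      have hA : α = tau μ * β' := by rw [hα, ha4]; exact DIV0 μ (a/4) b c0 d0
      have hQβ' : Q μ α = 2 * Q μ β' := by rw [hA, Q_tau_mul μ hμ]
      have hb : 2 * Q μ β' ≤ ((n - 20 : ℕ) : ℝ) := by
        have hcast : ((n - 20 : ℕ) : ℝ) = (n : ℝ) - 20 := by
          have : (20:ℕ) ≤ n := by omega
          push_cast [this]; ring
        rw [hcast]
        linarith
      obtain ⟨ℓ, c, β, hdig, hnaf, hβQ, hsum⟩ := IH (n - 20) (by omega) β' hb
      refine ⟨ℓ + 1, consd 0 c, β, ?_, ?_, hβQ, ?_⟩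
      · intro i hi
        match i with
        | 0 => exact mem0 μ j₁ j₂
        | (j+1) => exact hdig j (by omega)
      · intro i hi
        match i with
        | 0 => exact Or.inl rfl
        | (j+1) => exact hnaf j (by omega)
      · rw [sum_cons, hA, hsum]
        ring
    · -- digit step
      obtain ⟨d1, d2, hmem, hqint, x, y, hxa, hyb⟩ := select μ hμ j₁ j₂ a b hdiv
      set dig := mkelt μ d1 d2 0 0 with hdigdef
      set β' := mkelt μ (c0 + 2*μ*y) (d0 + μ*x) (μ*y - x) (-y) with hβ'
      have hA : α = dig + tau μ ^ 2 * β' := by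
        rw [hα, hxa, hyb]; exact DIV μ d1 d2 x y c0 d0
      have hdiff : α - dig = tau μ ^ 2 * β' := by rw [hA]; ring
      have hQdiff : Q μ (α - dig) = 4 * Q μ β' := by rw [hdiff, Q_tausq_mul μ hμ]
      have hQβnn : 0 ≤ Q μ β' := Q_nonneg μ hμ β'
      have hQαnn : 0 ≤ Q μ α := Q_nonneg μ hμ α
      have hdig40 : 2 * Q μ dig ≤ 40 := by
        rw [hdigdef, twoQ μ hμ]
        exact_mod_cast hqint
      have htri := sqrt_tri μ hμ α dig
      have hsq4 : Real.sqrt (2 * Q μ (α - dig)) = 2 * Real.sqrt (2 * Q μ β') := by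
        rw [hQdiff, show (2:ℝ) * (4 * Q μ β') = 2^2 * (2 * Q μ β') by ring,
          Real.sqrt_mul (by positivity), Real.sqrt_sq (by norm_num)]
      have hd40 : Real.sqrt (2 * Q μ dig) ≤ Real.sqrt 40 := Real.sqrt_le_sqrt hdig40
      have h40α : Real.sqrt 40 < Real.sqrt (2 * Q μ α) := by
        apply Real.sqrt_lt_sqrt (by norm_num) hQα
      have hlt : Real.sqrt (2 * Q μ β') < Real.sqrt (2 * Q μ α) := by
        have := hsq4 ▸ htri
        linarith
      have hQlt : 2 * Q μ β' < 2 * Q μ α := by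
        apply sqrt_lt_sqrt_imp _ _ (by linarith) (by linarith) hlt
      -- integrality
      have hval1 : 2 * Q μ β' = ((Qint μ (c0 + 2*μ*y) (d0 + μ*x) (μ*y - x) (-y) : ℤ) : ℝ) := by
        rw [hβ', twoQ μ hμ]
      have hval2 : 2 * Q μ α = ((Qint μ a b c0 d0 : ℤ) : ℝ) := by
        rw [hα, twoQ μ hμ]
      have hkk : (Qint μ (c0 + 2*μ*y) (d0 + μ*x) (μ*y - x) (-y)) < Qint μ a b c0 d0 := by
        have := hQlt
        rw [hval1, hval2] at this
        exact_mod_cast this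
      have hkn : (Qint μ a b c0 d0 : ℝ) ≤ (n : ℝ) := by rw [← hval2]; exact hn
      have hkn' : Qint μ a b c0 d0 ≤ (n : ℤ) := by exact_mod_cast hkn
      have hb : 2 * Q μ β' ≤ ((n - 1 : ℕ) : ℝ) := by
        rw [hval1]
        have h1 : (Qint μ (c0 + 2*μ*y) (d0 + μ*x) (μ*y - x) (-y)) ≤ (n : ℤ) - 1 := by omega
        have hcast : ((n - 1 : ℕ) : ℝ) = (n : ℝ) - 1 := by
          have : (1:ℕ) ≤ n := by omega
          push_cast [this]; ring
        rw [hcast]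
        calc ((Qint μ (c0 + 2*μ*y) (d0 + μ*x) (μ*y - x) (-y) : ℤ) : ℝ)
            ≤ ((n : ℤ) - 1 : ℤ) := by exact_mod_cast h1
          _ = (n : ℝ) - 1 := by push_cast; ring
      obtain ⟨ℓ, c, β, hdig2, hnaf, hβQ, hsum⟩ := IH (n - 1) (by omega) β' hb
      refine ⟨ℓ + 2, consd dig (consd 0 c), β, ?_, ?_, hβQ, ?_⟩
      · intro i hi
        match i with
        | 0 => exact hmem
        | 1 => exact mem0 μ j₁ j₂
        | (j+2) => exact hdig2 j (by omega)
      · intro i hi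
        match i with
        | 0 => exact Or.inr rfl
        | 1 => exact Or.inl rfl
        | (j+2) => exact hnaf j (by omega)
      · rw [show ℓ + 2 = (ℓ + 1) + 1 by ring, sum_cons, sum_cons, hA, hsum]
        ring

/-- Reduction for the τ-NAF: for every digit set `D̃(j₁,j₂)`, every `α ∈ R` can be
written as `Σ_{i<ℓ} c_i·τ^i + τ^ℓ·β` with NAF digits (among any two consecutive
digits at least one is zero) and a remainder `β` with `Q(β) ≤ 20`. -/
theorem stmt16 (μ : ℤ) (hμ : μ = 1 ∨ μ = -1) (j₁ j₂ : ℕ) (hj₁ : j₁ < 4) (hj₂ : j₂ < 4)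
    (α : Rg μ) :
    ∃ (ℓ : ℕ) (c : ℕ → Rg μ) (β : Rg μ),
      (∀ i < ℓ, c i ∈ Dtil μ j₁ j₂) ∧
      (∀ i, i + 1 < ℓ → c i = 0 ∨ c (i + 1) = 0) ∧
      Q μ β ≤ 20 ∧
      α = (∑ i ∈ Finset.range ℓ, c i * tau μ ^ i) + tau μ ^ ℓ * β := by
  obtain ⟨a, b, c0, d0, hα⟩ := rep μ α
  have hval : 2 * Q μ α = ((Qint μ a b c0 d0 : ℤ) : ℝ) := by rw [hα, twoQ μ hμ]
  refine main_ind μ hμ j₁ j₂ (Qint μ a b c0 d0).toNat α ?_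
  rw [hval]
  have := Int.self_le_toNat (Qint μ a b c0 d0)
  exact_mod_cast this
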